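/- Let μ be a Borel probability measure on [a,b] ⊂ ℝ with mean ∫ x dμ = c and variance v. Then v ≤ (b − c)(c − a) (Bhatia–Davis inequality). -/

import Mathlib

open MeasureTheory

/-- Bhatia–Davis inequality: for a probability measure supported in `[a,b]`
with mean `c` and variance `v`, one has `v ≤ (b-c)(c-a)`. -/
theorem stmt10 (a b : ℝ) (hab : a < b)
    (μ : Measure ℝ) [IsProbabilityMeasure μ]
    (hsupp : ∀ᵐ x ∂μ, x ∈ Set.Icc a b)
    (h1 : Integrable (fun x => x) μ) (h2 : Integrable (fun x => x ^ 2) μ)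
    (c v : ℝ) (hc : c = ∫ x, x ∂μ) (hv : v = (∫ x, x ^ 2 ∂μ) - c ^ 2) :
    v ≤ (b - c) * (c - a) := by
  have hint : Integrable (fun x => (a + b) * x - x ^ 2) μ :=
    (h1.const_mul (a + b)).sub h2
  have key : 0 ≤ ∫ x, ((a + b) * x - x ^ 2) ∂μ - a * b := by
    have h0 : 0 ≤ ∫ x, ((a + b) * x - x ^ 2 - a * b) ∂μ := by
      apply integral_nonneg_of_ae
      filter_upwards [hsupp] with x hx
      have h1 : 0 ≤ (b - x) * (x - a) :=
        mul_nonneg (by linarith [hx.2]) (by linarith [hx.1])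
      show (0:ℝ) ≤ _
      nlinarith
    rwa [integral_sub hint (integrable_const _), integral_const,
      probReal_univ, smul_eq_mul, one_mul] at h0
  rw [integral_sub (h1.const_mul (a + b)) h2, integral_const_mul] at key
  rw [hv, hc] at *
  nlinarith [key]
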